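/- For every n there exists a finite Heyting algebra generated by a single element having more than n elements; i.e., one-generated finite Heyting algebras are of unbounded size. -/

import Mathlib

/-- `S` is (the underlying set of) a Heyting subalgebra of `A`. -/
def IsHeytingSubalg {A : Type*} [HeytingAlgebra A] (S : Set A) : Prop :=
  ⊥ ∈ S ∧ ⊤ ∈ S ∧ ∀ x ∈ S, ∀ y ∈ S, x ⊓ y ∈ S ∧ x ⊔ y ∈ S ∧ x ⇨ y ∈ S

/-! ### Auxiliary construction

We build, for each `m`, the Heyting algebra of lower sets of the poset on
`{0, …, m-1}` with `i ≤ j ↔ i = j ∨ j + 2 ≤ i`.  The lower sets are exactly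
`∅` and the sets `T i = {x | i ≤ x}` and `S i = {i} ∪ {x | i + 2 ≤ x}`, and
this algebra is generated by the single element `T (m-1)`. -/

structure MyP (m : ℕ) where
  val : ℕ
  isLt : val < m

instance (m : ℕ) : PartialOrder (MyP m) where
  le i j := i.val = j.val ∨ j.val + 2 ≤ i.val
  le_refl i := Or.inl rfl
  le_trans i j k hij hjk := by
    rcases hij with h | h <;> rcases hjk with h' | h' <;> [left; right; right; right] <;> omega
  le_antisymm i j hij hji := by
    have : i.val = j.val := by rcases hij with h | h <;> rcases hji with h' | h' <;> omega
    cases i; cases j; simpa using this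

theorem MyP.le_def {m : ℕ} {i j : MyP m} : i ≤ j ↔ i.val = j.val ∨ j.val + 2 ≤ i.val := Iff.rfl

instance (m : ℕ) : Finite (MyP m) :=
  Finite.of_injective (fun x => (⟨x.val, x.isLt⟩ : Fin m)) (by
    intro a b h
    cases a; cases b
    simpa using congrArg Fin.val h)

/-- A general membership description of Heyting implication on lower sets. -/
theorem LowerSet.mem_himp_iff {α : Type*} [Preorder α] {U V : LowerSet α} {x : α} :
    x ∈ U ⇨ V ↔ ∀ ⦃y⦄, y ≤ x → y ∈ U → y ∈ V := by
  constructor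
  · intro hx y hyx hyU
    have h1 : y ∈ U ⇨ V := (U ⇨ V).lower hyx hx
    have h2 : (U ⇨ V) ⊓ U ≤ V := himp_inf_le
    exact (LowerSet.coe_subset_coe.2 h2) (by
      rw [LowerSet.coe_inf]; exact ⟨h1, hyU⟩)
  · intro h
    have hW : IsLowerSet {z : α | ∀ ⦃y⦄, y ≤ z → y ∈ U → y ∈ V} := by
      intro a b hba ha y hyb hyU
      exact ha (le_trans hyb hba) hyU
    have hle : (⟨_, hW⟩ : LowerSet α) ≤ U ⇨ V := by
      rw [le_himp_iff, ← LowerSet.coe_subset_coe, LowerSet.coe_inf]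
      rintro z ⟨hzW, hzU⟩
      exact hzW le_rfl hzU
    exact (LowerSet.coe_subset_coe.2 hle) h

/-- The lower set `{x | i ≤ x}`. -/
def Tset (m i : ℕ) : LowerSet (MyP m) :=
  ⟨{x | i ≤ x.val}, by
    intro a b hba ha
    rcases hba with h | h <;> simp only [Set.mem_setOf_eq] at * <;> omega⟩

/-- The lower set `{x | x = i ∨ i + 2 ≤ x}`. -/
def Sset (m i : ℕ) : LowerSet (MyP m) :=
  ⟨{x | x.val = i ∨ i + 2 ≤ x.val}, by
    intro a b hba ha
    rcases hba with h | h <;> simp only [Set.mem_setOf_eq] at * <;> omega⟩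

theorem mem_Tset {m i : ℕ} {x : MyP m} : x ∈ Tset m i ↔ i ≤ x.val := Iff.rfl

theorem mem_Sset {m i : ℕ} {x : MyP m} : x ∈ Sset m i ↔ x.val = i ∨ i + 2 ≤ x.val := Iff.rfl

theorem bot_eq_Tset (m : ℕ) : (⊥ : LowerSet (MyP m)) = Tset m m := by
  apply SetLike.ext
  intro x
  simp only [mem_Tset]
  constructor
  · intro h; exact absurd h (LowerSet.notMem_bot)
  · intro h; exact absurd x.isLt (by omega)

theorem himp_Tset {m i : ℕ} (h1 : 1 ≤ i) (h2 : i < m) :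
    Tset m i ⇨ Tset m (i + 1) = Sset m (i - 1) := by
  apply SetLike.ext
  intro x
  rw [LowerSet.mem_himp_iff, mem_Sset]
  constructor
  · intro h
    have ha : i ≤ x.val → i + 1 ≤ x.val := fun hx => h (le_refl x) hx
    rcases Nat.lt_or_ge x.val i with hx | hx
    · left
      by_contra hne
      have hb := h (y := ⟨i, h2⟩) (Or.inr (show x.val + 2 ≤ i by omega))
        (show i ≤ i from le_refl i)
      have hb' : i + 1 ≤ i := hb
      omega
    · right
      have := ha hx
      omega
  · rintro hx y hy hyU
    rw [MyP.le_def] at hy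
    rw [mem_Tset] at hyU ⊢
    rcases hy with h | h <;> omega

theorem sup_Sset_Tset {m i : ℕ} (h1 : 1 ≤ i) :
    Sset m (i - 1) ⊔ Tset m i = Tset m (i - 1) := by
  apply SetLike.ext
  intro x
  rw [← SetLike.mem_coe, LowerSet.coe_sup]
  simp only [Set.mem_union, SetLike.mem_coe, mem_Sset, mem_Tset]
  omega

/-- The chain of generated elements: `tch m k` will equal `Tset m (m - 1 - k)`. -/
def tch (m : ℕ) : ℕ → LowerSet (MyP m)
  | 0 => Tset m (m - 1)
  | 1 => (Tset m (m - 1) ⇨ ⊥) ⊔ Tset m (m - 1)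
  | (k + 2) => (tch m (k + 1) ⇨ tch m k) ⊔ tch m (k + 1)

theorem tch_eq (m : ℕ) : ∀ k, k ≤ m - 1 → tch m k = Tset m (m - 1 - k) := by
  intro k
  induction k using Nat.strong_induction_on with
  | _ k ih =>
    match k with
    | 0 => intro _; rfl
    | 1 =>
      intro hk
      show (Tset m (m - 1) ⇨ ⊥) ⊔ Tset m (m - 1) = _
      rw [bot_eq_Tset]
      have e1 : m = (m - 1) + 1 := by omega
      rw [show Tset m m = Tset m ((m - 1) + 1) by rw [← e1]]
      rw [himp_Tset (by omega) (by omega), sup_Sset_Tset (by omega)]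
    | (k + 2) =>
      intro hk
      have e1 := ih (k + 1) (by omega) (by omega)
      have e0 := ih k (by omega) (by omega)
      show (tch m (k + 1) ⇨ tch m k) ⊔ tch m (k + 1) = _
      rw [e1, e0]
      have h1 : m - 1 - k = (m - 1 - (k + 1)) + 1 := by omega
      rw [h1, himp_Tset (by omega) (by omega), sup_Sset_Tset (by omega)]
      exact congrArg (Tset m) (by omega)

/-- The elements generated by `Tset m (m-1)`. -/
inductive Gen (m : ℕ) : LowerSet (MyP m) → Prop
  | var : Gen m (Tset m (m - 1))
  | bot : Gen m ⊥
  | top : Gen m ⊤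
  | inf {x y} : Gen m x → Gen m y → Gen m (x ⊓ y)
  | sup {x y} : Gen m x → Gen m y → Gen m (x ⊔ y)
  | himp {x y} : Gen m x → Gen m y → Gen m (x ⇨ y)

theorem gen_tch (m : ℕ) : ∀ k, Gen m (tch m k) := by
  intro k
  induction k using Nat.strong_induction_on with
  | _ k ih =>
    match k with
    | 0 => exact Gen.var
    | 1 => exact Gen.sup (Gen.himp Gen.var Gen.bot) Gen.var
    | (k + 2) =>
      exact Gen.sup (Gen.himp (ih (k + 1) (by omega)) (ih k (by omega)))
        (ih (k + 1) (by omega))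

/-- The one-generated subalgebra, as a type. -/
def GenAlg (m : ℕ) : Type := {x : LowerSet (MyP m) // Gen m x}

namespace GenAlg

variable {m : ℕ}

instance : Max (GenAlg m) := ⟨fun a b => ⟨a.1 ⊔ b.1, Gen.sup a.2 b.2⟩⟩
instance : Min (GenAlg m) := ⟨fun a b => ⟨a.1 ⊓ b.1, Gen.inf a.2 b.2⟩⟩
instance : Top (GenAlg m) := ⟨⟨⊤, Gen.top⟩⟩
instance : Bot (GenAlg m) := ⟨⟨⊥, Gen.bot⟩⟩
instance : HImp (GenAlg m) := ⟨fun a b => ⟨a.1 ⇨ b.1, Gen.himp a.2 b.2⟩⟩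
instance : Compl (GenAlg m) := ⟨fun a => ⟨a.1 ⇨ ⊥, Gen.himp a.2 Gen.bot⟩⟩
instance : LE (GenAlg m) := ⟨fun a b => a.1 ≤ b.1⟩
instance : LT (GenAlg m) := ⟨fun a b => a.1 < b.1⟩

def toL (a : GenAlg m) : LowerSet (MyP m) := a.1

/-- Constructor for `GenAlg`. -/
def mk (x : LowerSet (MyP m)) (h : Gen m x) : GenAlg m := ⟨x, h⟩

theorem toL_injective : Function.Injective (toL (m := m)) := fun _ _ h => Subtype.ext h

instance : HeytingAlgebra (GenAlg m) :=
  Function.Injective.heytingAlgebra toL toL_injective Iff.rfl Iff.rfl (fun _ _ => rfl) (fun _ _ => rfl) rfl rfl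
    (fun a => (himp_bot a.1).symm) (fun _ _ => rfl)

instance : Finite (GenAlg m) := by
  have : Finite (LowerSet (MyP m)) := Finite.of_injective _ SetLike.coe_injective
  exact Finite.of_injective toL toL_injective

noncomputable instance : Fintype (GenAlg m) := Fintype.ofFinite _

end GenAlg

/-- One-generated finite Heyting algebras are of unbounded size: for every `n` there is a
finite Heyting algebra with more than `n` elements generated by a single element. -/
theorem stmt_14 (n : ℕ) :
    ∃ (A : Type) (_ : HeytingAlgebra A) (_ : Fintype A) (a : A),
      (∀ S : Set A, IsHeytingSubalg S → a ∈ S → S = Set.univ) ∧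
      n < Fintype.card A := by
  refine ⟨GenAlg (n + 1), inferInstance, inferInstance,
    ⟨Tset (n + 1) ((n + 1) - 1), Gen.var⟩, ?_, ?_⟩
  · intro S hS haS
    apply Set.eq_univ_of_forall
    rintro ⟨b, hb⟩
    induction hb with
    | var => exact haS
    | bot => exact hS.1
    | top => exact hS.2.1
    | inf hx hy ihx ihy => exact (hS.2.2 _ ihx _ ihy).1
    | sup hx hy ihx ihy => exact (hS.2.2 _ ihx _ ihy).2.1
    | himp hx hy ihx ihy => exact (hS.2.2 _ ihx _ ihy).2.2
  · have inj : Function.Injective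
        (fun k : Fin (n + 1) => GenAlg.mk (tch (n + 1) k.val) (gen_tch _ _)) := by
      intro k l h
      have hval : tch (n + 1) k.val = tch (n + 1) l.val := congrArg GenAlg.toL h
      rw [tch_eq _ _ (by omega), tch_eq _ _ (by omega)] at hval
      have hk := SetLike.ext_iff.1 hval ⟨(n + 1) - 1 - k.val, by omega⟩
      have hl := SetLike.ext_iff.1 hval ⟨(n + 1) - 1 - l.val, by omega⟩
      rw [mem_Tset, mem_Tset] at hk hl
      have hkv := k.isLt
      have hlv := l.isLt
      apply Fin.ext
      simp only at hk hl
      omega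
    have := Fintype.card_le_of_injective _ inj
    rw [Fintype.card_fin] at this
    omega
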